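/- Let R be a finite ring with q elements, M a positive integer, k = (k_α)_{α∈R⁻} a vector of nonnegative integers, and Γ a finite index set. Suppose nonnegative integers x_i^{(α)} (i ∈ Γ, α ∈ R⁻) satisfy Σ_{i∈Γ} x_i^{(α)} = k_α·M for every α ∈ R⁻ and Σ_{α∈R⁻} x_i^{(α)} ≤ M for every i ∈ Γ. Then there exist nonnegative integers w_a indexed by the vectors a ∈ R^Γ having exactly k_α coordinates equal to α for each α ∈ R⁻ (and the rest equal to 0), such that Σ_a w_a = M and, for every α ∈ R⁻ and i ∈ Γ, x_i^{(α)} = Σ_{a : a_i = α} w_a. -/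

import Mathlib

open Finset in
lemma exists_assignment {R : Type} [Fintype R] [DecidableEq R]
    {Γ : Type} [Fintype Γ] [DecidableEq Γ]
    (M : ℕ) (hM : 0 < M) (m : R → ℕ) (y : Γ → R → ℕ)
    (hrow : ∀ i, ∑ α, y i α = M) (hcol : ∀ α, ∑ i, y i α = m α * M) :
    ∃ a : Γ → R, (∀ i, 0 < y i (a i)) ∧
      ∀ α, (univ.filter (fun i => a i = α)).card = m α := by
  classical
  have hcards : (∑ α, m α) = Fintype.card Γ := by
    have h1 : (∑ α, m α) * M = Fintype.card Γ * M := by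
      rw [Finset.sum_mul]
      simp_rw [← hcol]
      rw [Finset.sum_comm]
      simp [hrow, Finset.card_univ]
    exact Nat.eq_of_mul_eq_mul_right hM h1
  set ι := (α : R) × Fin (m α) with hι
  set t : ι → Finset Γ := fun p => univ.filter (fun i => 0 < y i p.1) with ht
  have hall : ∀ s : Finset ι, s.card ≤ (s.biUnion t).card := by
    intro s
    set T := s.image Sigma.fst with hT
    have hbu : s.biUnion t = T.biUnion (fun α => univ.filter (fun i => 0 < y i α)) := by
      rw [hT, Finset.image_biUnion]
    have h1 : s.card ≤ ∑ α ∈ T, m α := by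
      have hsub : s ⊆ T.sigma (fun α => (univ : Finset (Fin (m α)))) := by
        intro p hp
        rw [Finset.mem_sigma]
        exact ⟨Finset.mem_image_of_mem _ hp, Finset.mem_univ _⟩
      calc s.card ≤ (T.sigma (fun α => (univ : Finset (Fin (m α))))).card :=
            Finset.card_le_card hsub
        _ = ∑ α ∈ T, m α := by rw [Finset.card_sigma]; simp
    have h2 : (∑ α ∈ T, m α) * M ≤ (T.biUnion (fun α => univ.filter (fun i => 0 < y i α))).card * M := by
      set N := T.biUnion (fun α => univ.filter (fun i => 0 < y i α)) with hN
      calc (∑ α ∈ T, m α) * M = ∑ α ∈ T, ∑ i, y i α := by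
            rw [Finset.sum_mul]; simp_rw [hcol]
        _ = ∑ i, ∑ α ∈ T, y i α := Finset.sum_comm
        _ = ∑ i ∈ N, ∑ α ∈ T, y i α := by
            refine (Finset.sum_subset (Finset.subset_univ _) ?_).symm
            intro i _ hi
            refine Finset.sum_eq_zero fun α hα => ?_
            by_contra h
            exact hi (Finset.mem_biUnion.2 ⟨α, hα, Finset.mem_filter.2
              ⟨Finset.mem_univ _, Nat.pos_of_ne_zero h⟩⟩)
        _ ≤ ∑ i ∈ N, M := by
            refine Finset.sum_le_sum fun i _ => ?_
            rw [← hrow i]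
            exact Finset.sum_le_sum_of_subset (Finset.subset_univ _)
        _ = N.card * M := by rw [Finset.sum_const, smul_eq_mul]
    exact h1.trans (Nat.le_of_mul_le_mul_right h2 hM) |>.trans_eq (by rw [hbu])
  obtain ⟨f, hfinj, hft⟩ := (Finset.all_card_le_biUnion_card_iff_exists_injective t).1 hall
  have hcard : Fintype.card ι = Fintype.card Γ := by
    show Fintype.card ((α : R) × Fin (m α)) = _
    rw [Fintype.card_sigma]; simpa using hcards
  have hbij : Function.Bijective f :=
    (Fintype.bijective_iff_injective_and_card f).2 ⟨hfinj, hcard⟩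
  set e := Equiv.ofBijective f hbij with he
  refine ⟨fun i => (e.symm i).1, fun i => ?_, fun α => ?_⟩
  · have := hft (e.symm i)
    rw [ht] at this
    have hfe : f (e.symm i) = i := e.apply_symm_apply i
    rw [hfe] at this
    exact (Finset.mem_filter.1 this).2
  · have : (univ.filter (fun i => (e.symm i).1 = α)).card
        = (univ.filter (fun p : ι => p.1 = α)).card := by
      refine Finset.card_bij' (fun i _ => e.symm i) (fun p _ => e p) ?_ ?_ ?_ ?_
      · intro i hi; simp only [Finset.mem_filter, Finset.mem_univ, true_and] at hi ⊢; exact hi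
      · intro p hp; simp only [Finset.mem_filter, Finset.mem_univ, true_and,
          Equiv.symm_apply_apply] at hp ⊢; exact hp
      · intro i _; exact e.apply_symm_apply i
      · intro p _; exact e.symm_apply_apply p
    rw [this]
    have : (univ.filter (fun p : ι => p.1 = α)) = ({α} : Finset R).sigma (fun β => univ) := by
      ext p
      rw [Finset.mem_filter, Finset.mem_sigma]
      simp
    rw [this, Finset.card_sigma]
    simp

open Finset in
lemma flow_aux {R : Type} [CommRing R] [Fintype R] [DecidableEq R]
    {Γ : Type} [Fintype Γ] [DecidableEq Γ] :
    ∀ (M : ℕ) (k : {α : R // α ≠ 0} → ℕ) (x : Γ → {α : R // α ≠ 0} → ℕ),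
    (∀ α : {α : R // α ≠ 0}, ∑ i, x i α = k α * M) →
    (∀ i : Γ, ∑ α : {α : R // α ≠ 0}, x i α ≤ M) →
    ∃ w : (Γ → R) → ℕ,
      (∀ a : Γ → R, w a ≠ 0 →
        ∀ α : {α : R // α ≠ 0},
          (Finset.univ.filter (fun i => a i = α.val)).card = k α) ∧
      (∑ a : Γ → R, w a = M) ∧
      (∀ (α : {α : R // α ≠ 0}) (i : Γ),
        x i α = ∑ a ∈ Finset.univ.filter (fun a : Γ → R => a i = α.val), w a) := by
  intro M
  induction M with
  | zero =>
    intro k x hsum hbd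
    refine ⟨fun _ => 0, by simp, by simp, fun α i => ?_⟩
    have h0 : x i α = 0 := by
      have := hbd i
      have h1 : x i α ≤ ∑ β : {α : R // α ≠ 0}, x i β :=
        Finset.single_le_sum (fun _ _ => Nat.zero_le _) (Finset.mem_univ α)
      omega
    simp [h0]
  | succ M ih =>
    intro k x hsum hbd
    -- set up m and y
    set S := ∑ α : {α : R // α ≠ 0}, k α with hS
    have hSle : S ≤ Fintype.card Γ := by
      have h1 : S * (M + 1) ≤ Fintype.card Γ * (M + 1) := by
        calc S * (M+1) = ∑ α : {α : R // α ≠ 0}, k α * (M+1) := by rw [Finset.sum_mul]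
          _ = ∑ α : {α : R // α ≠ 0}, ∑ i, x i α := by simp_rw [hsum]
          _ = ∑ i, ∑ α : {α : R // α ≠ 0}, x i α := Finset.sum_comm
          _ ≤ ∑ _i : Γ, (M+1) := Finset.sum_le_sum fun i _ => hbd i
          _ = Fintype.card Γ * (M+1) := by simp [Finset.card_univ, mul_comm]
      exact Nat.le_of_mul_le_mul_right h1 (Nat.succ_pos M)
    set m : R → ℕ := fun β => if h : β = 0 then Fintype.card Γ - S else k ⟨β, h⟩ with hm
    set y : Γ → R → ℕ := fun i β => if h : β = 0 then (M+1) - ∑ α : {α : R // α ≠ 0}, x i α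
      else x i ⟨β, h⟩ with hy
    have herase : ∀ (g : R → ℕ), ∑ β ∈ univ.erase (0:R), g β = ∑ α : {α : R // α ≠ 0}, g α.val := by
      intro g
      refine Finset.sum_subtype _ (fun β => ?_) g
      simp
    have hrow : ∀ i, ∑ β : R, y i β = M + 1 := by
      intro i
      rw [← Finset.add_sum_erase _ _ (Finset.mem_univ (0:R)), herase]
      have h1 : ∑ α : {α : R // α ≠ 0}, y i α.val = ∑ α : {α : R // α ≠ 0}, x i α := by
        refine Finset.sum_congr rfl fun α _ => ?_
        simp [hy, α.2]
      rw [h1]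
      simp only [hy, dif_pos rfl]
      have := hbd i
      omega
    have hcol : ∀ β : R, ∑ i, y i β = m β * (M + 1) := by
      intro β
      by_cases h : β = 0
      · subst h
        simp only [hy, hm, dif_pos rfl]
        have h2 : ∑ i, ((M+1) - ∑ α : {α : R // α ≠ 0}, x i α)
            + ∑ i, ∑ α : {α : R // α ≠ 0}, x i α = Fintype.card Γ * (M+1) := by
          rw [← Finset.sum_add_distrib]
          have : ∀ i ∈ (univ : Finset Γ), ((M+1) - ∑ α : {α : R // α ≠ 0}, x i α)
              + ∑ α : {α : R // α ≠ 0}, x i α = M+1 := fun i _ => by have := hbd i; omega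
          rw [Finset.sum_congr rfl this]
          simp [Finset.card_univ, mul_comm]
        have h3 : ∑ i, ∑ α : {α : R // α ≠ 0}, x i α = S * (M+1) := by
          rw [Finset.sum_comm, hS, Finset.sum_mul]
          exact Finset.sum_congr rfl fun α _ => hsum α
        have h4 : (Fintype.card Γ - S) * (M+1) + S * (M+1) = Fintype.card Γ * (M+1) := by
          rw [← Nat.add_mul, Nat.sub_add_cancel hSle]
        omega
      · simp only [hy, hm, dif_neg h]
        exact hsum ⟨β, h⟩
    obtain ⟨a, hapos, hacard⟩ := exists_assignment (M+1) (Nat.succ_pos M) m y hrow hcol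
    -- properties of a
    have haα : ∀ (i : Γ) (α : {α : R // α ≠ 0}), a i = α.val → 0 < x i α := by
      intro i α hai
      have := hapos i
      rw [hai] at this
      simpa [hy, dif_neg α.2, Subtype.coe_eta] using this
    have hacard' : ∀ α : {α : R // α ≠ 0},
        (univ.filter (fun i => a i = α.val)).card = k α := by
      intro α
      have := hacard α.val
      simp only [hm] at this
      rwa [dif_neg α.2, Subtype.coe_eta] at this
    -- subtracted matrix
    set x' : Γ → {α : R // α ≠ 0} → ℕ :=
      fun i α => x i α - (if a i = α.val then 1 else 0) with hx'
    have hxub : ∀ i α, (if a i = α.val then 1 else 0) ≤ x i α := by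
      intro i α
      by_cases h : a i = α.val
      · rw [if_pos h]; exact haα i α h
      · simp [h]
    have hsum' : ∀ α : {α : R // α ≠ 0}, ∑ i, x' i α = k α * M := by
      intro α
      have h1 : ∑ i, x' i α + ∑ i, (if a i = α.val then 1 else 0) = ∑ i, x i α := by
        rw [← Finset.sum_add_distrib]
        exact Finset.sum_congr rfl fun i _ => Nat.sub_add_cancel (hxub i α)
      have h2 : ∑ i, (if a i = α.val then 1 else 0) = k α := by
        rw [← hacard' α, Finset.card_filter]
      have h3 := hsum α
      have h4 : k α * (M+1) = k α * M + k α := by ring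
      omega
    have hbd' : ∀ i, ∑ α : {α : R // α ≠ 0}, x' i α ≤ M := by
      intro i
      by_cases h : a i = 0
      · have hpos := hapos i
        rw [h] at hpos
        simp only [hy, dif_pos rfl] at hpos
        have hle : ∑ α : {α : R // α ≠ 0}, x' i α ≤ ∑ α : {α : R // α ≠ 0}, x i α :=
          Finset.sum_le_sum fun α _ => Nat.sub_le _ _
        omega
      · have h1 : ∑ α : {α : R // α ≠ 0}, x' i α
            + ∑ α : {α : R // α ≠ 0}, (if a i = α.val then 1 else 0)
            = ∑ α : {α : R // α ≠ 0}, x i α := by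
          rw [← Finset.sum_add_distrib]
          exact Finset.sum_congr rfl fun α _ => Nat.sub_add_cancel (hxub i α)
        have h2 : ∑ α : {α : R // α ≠ 0}, (if a i = α.val then 1 else 0) = 1 := by
          have : ∀ α ∈ (univ : Finset {α : R // α ≠ 0}),
              (if a i = α.val then 1 else 0) = if α = ⟨a i, h⟩ then 1 else 0 := by
            intro α _
            by_cases hc : α = (⟨a i, h⟩ : {α : R // α ≠ 0})
            · simp [hc]
            · have hne : ¬ a i = α.val := fun he => hc (Subtype.ext he.symm)
              simp [hne, hc]
          rw [Finset.sum_congr rfl this, Finset.sum_ite_eq' univ (⟨a i, h⟩ : {α : R // α ≠ 0})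
            (fun _ => 1)]
          simp
        have h3 := hbd i
        omega
    obtain ⟨w', hw'supp, hw'sum, hw'marg⟩ := ih k x' hsum' hbd'
    refine ⟨fun b => w' b + (if b = a then 1 else 0), ?_, ?_, ?_⟩
    · intro b hb α
      by_cases h : w' b = 0
      · have hba : b = a := by
          by_contra hba
          simp [h, hba] at hb
        subst hba
        exact hacard' α
      · exact hw'supp b h α
    · rw [Finset.sum_add_distrib, hw'sum, Finset.sum_ite_eq' univ a (fun _ => 1)]
      simp
    · intro α i
      rw [Finset.sum_add_distrib, ← hw'marg α i,
        Finset.sum_ite_eq' (univ.filter (fun b : Γ → R => b i = α.val)) a (fun _ => 1)]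
      simp only [Finset.mem_filter, Finset.mem_univ, true_and, hx']
      have h2 := hxub i α
      by_cases h : a i = α.val
      · simp only [if_pos h] at h2 ⊢
        omega
      · simp only [if_neg h]
        omega

/-- the combinatorial core of Proposition 14. If nonnegative integers
`x_i^{(α)}` satisfy `Σ_i x_i^{(α)} = k_α·M` for each `α ∈ R⁻` and `Σ_α x_i^{(α)} ≤ M`
for each `i`, then there are nonnegative integer weights `w_a` supported on the vectors
`a ∈ R^Γ` having exactly `k_α` coordinates equal to `α` for each `α ∈ R⁻`, summing to
`M`, whose marginals recover the `x_i^{(α)}`. -/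
theorem flow_decomposition {R : Type} [CommRing R] [Fintype R] [DecidableEq R]
    {Γ : Type} [Fintype Γ] [DecidableEq Γ]
    (M : ℕ) (hM : 0 < M)
    (k : {α : R // α ≠ 0} → ℕ)
    (x : Γ → {α : R // α ≠ 0} → ℕ)
    (hsum : ∀ α : {α : R // α ≠ 0}, ∑ i, x i α = k α * M)
    (hbd : ∀ i : Γ, ∑ α : {α : R // α ≠ 0}, x i α ≤ M) :
    ∃ w : (Γ → R) → ℕ,
      (∀ a : Γ → R, w a ≠ 0 →
        ∀ α : {α : R // α ≠ 0},
          (Finset.univ.filter (fun i => a i = α.val)).card = k α) ∧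
      (∑ a : Γ → R, w a = M) ∧
      (∀ (α : {α : R // α ≠ 0}) (i : Γ),
        x i α = ∑ a ∈ Finset.univ.filter (fun a : Γ → R => a i = α.val), w a) := by
  exact flow_aux M k x hsum hbd
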